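/- arXiv:2202.08319 — 4 statements merged into one kernel-verified Lean document; each statement's English description precedes it below -/
import Mathlib

section
/- Let R be a commutative integral domain with 1, let c ∈ R be a nonzero element, let u ∈ R be a unit with u - 1 ∈ c²R, and let A = [[a, b], [c, d]] ∈ SL₂(R). Set x ∈ R to be the element with u⁴ - 1 = cx (which exists since u - 1 ∈ c²R), and set t := ax. Then t ∈ cR, and the matrix Y := E₁₂(t) A⁻¹ E₁₂(-t) h(u²) A h(u⁻²) is upper triangular of the form [[u⁻⁴, q], [0, u⁴]] for some q ∈ cR. -/
open Matrix

def E12 {R : Type*} [CommRing R] (x : R) : Matrix.SpecialLinearGroup (Fin 2) R :=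
  ⟨!![1, x; 0, 1], by simp [Matrix.det_fin_two_of]⟩

def E21 {R : Type*} [CommRing R] (x : R) : Matrix.SpecialLinearGroup (Fin 2) R :=
  ⟨!![1, 0; x, 1], by simp [Matrix.det_fin_two_of]⟩

def hDiag {R : Type*} [CommRing R] (u : Rˣ) : Matrix.SpecialLinearGroup (Fin 2) R :=
  ⟨!![(u : R), 0; 0, ((u⁻¹ : Rˣ) : R)], by simp [Matrix.det_fin_two_of]⟩

def E2 (R : Type*) [CommRing R] : Subgroup (Matrix.SpecialLinearGroup (Fin 2) R) :=
  Subgroup.closure {M | ∃ x : R, M = E12 x ∨ M = E21 x}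

def E2I (R : Type*) [CommRing R] (I : Ideal R) :
    Subgroup (Matrix.SpecialLinearGroup (Fin 2) R) :=
  Subgroup.closure {M | ∃ g ∈ E2 R, ∃ x ∈ I, M = g * E12 x * g⁻¹}

/-- From the proof of Lemma 3.5: with `u⁴ - 1 = c·x` and `t := a·x`, one has
`t ∈ cR` and `Y := E₁₂(t) A⁻¹ E₁₂(-t) h(u²) A h(u⁻²)` is upper triangular of
the form `[[u⁻⁴, q], [0, u⁴]]` with `q ∈ cR`. -/
theorem stmt1 {R : Type*} [CommRing R] [IsDomain R] (c : R) (hc : c ≠ 0) (u : Rˣ)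
    (hu : (u : R) - 1 ∈ Ideal.span {c ^ 2})
    (A : Matrix.SpecialLinearGroup (Fin 2) R) (hA : A.1 1 0 = c)
    (x : R) (hx : (u : R) ^ 4 - 1 = c * x) (t : R) (ht : t = A.1 0 0 * x) :
    t ∈ Ideal.span {c} ∧
    ∃ q ∈ Ideal.span {c},
      (E12 t * A⁻¹ * E12 (-t) * hDiag (u ^ 2) * A * hDiag ((u ^ 2)⁻¹)).1 =
        !![((u⁻¹ : Rˣ) : R) ^ 4, q; 0, (u : R) ^ 4] := by
  obtain ⟨y, hy⟩ := Ideal.mem_span_singleton'.mp hu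
  set a := A.1 0 0 with ha
  set b := A.1 0 1 with hb
  set d := A.1 1 1 with hd
  have hdet : a * d - b * c = 1 := by
    have := A.2
    rw [Matrix.det_fin_two] at this
    rw [ha, hb, hd, ← hA]; linear_combination this
  have hr : x = c * (y * ((u : R) ^ 3 + (u : R) ^ 2 + (u : R) + 1)) := by
    apply mul_left_cancel₀ hc
    linear_combination -hx - ((u:R)^3 + (u:R)^2 + (u:R) + 1) * hy
  have huv : (u : R) * ((u⁻¹ : Rˣ) : R) = 1 := u.mul_inv
  constructor
  · exact Ideal.mem_span_singleton'.mpr ⟨a * (y * ((u : R) ^ 3 + (u : R) ^ 2 + (u : R) + 1)), by rw [ht, hr]; ring⟩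
  · refine ⟨c * (x * (b * d - a * b * (u : R) ^ 4) +
      (y * ((u : R) ^ 3 + (u : R) ^ 2 + (u : R) + 1)) * (a ^ 2 * d * (u : R) ^ 4 - a * d ^ 2)),
      Ideal.mem_span_singleton'.mpr ⟨_, mul_comm _ _⟩, ?_⟩
    have hv2 : (((u ^ 2)⁻¹ : Rˣ) : R) = ((u⁻¹ : Rˣ) : R) ^ 2 := by
      rw [← inv_pow]; exact Units.val_pow_eq_pow_val _ _
    have hu2 : (((u ^ 2) : Rˣ) : R) = (u : R) ^ 2 := Units.val_pow_eq_pow_val _ _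
    have hAinv : (A⁻¹).1 = !![d, -b; -c, a] := by
        rw [Matrix.SpecialLinearGroup.coe_inv, Matrix.adjugate_fin_two]
        rw [ha, hb, hd, hA]
    ext i j
    fin_cases i <;> fin_cases j <;>
        simp only [Matrix.SpecialLinearGroup.coe_mul] <;>
        simp [E12, hDiag, hAinv, Matrix.mul_apply, Fin.sum_univ_succ, Matrix.vecMul,
          Matrix.vecHead, Matrix.vecTail, dotProduct, hv2, hu2,
          ← ha, ← hb, ← hd, hA, ht]
    · linear_combination ((-1)*a*c*d*((u⁻¹:Rˣ):R)^4 + a^2*c*((u⁻¹:Rˣ):R)^4 + (-1)*a^2*c*(u:R)^2*((u⁻¹:Rˣ):R)^2 + a^2*c^2*x*((u⁻¹:Rˣ):R)^4 + a^2*c^3*y*((u⁻¹:Rˣ):R)^4 + a^2*c^3*y*(u:R)*((u⁻¹:Rˣ):R)^4 + a^2*c^3*y*(u:R)^2*((u⁻¹:Rˣ):R)^4 + a^2*c^3*y*(u:R)^3*((u⁻¹:Rˣ):R)^4) * hr + ((-1)*a*d*((u⁻¹:Rˣ):R)^4 + (-1)*a*d*(u:R)*((u⁻¹:Rˣ):R)^4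 + (-1)*a*d*(u:R)^2*((u⁻¹:Rˣ):R)^4 + (-1)*a*d*(u:R)^3*((u⁻¹:Rˣ):R)^4 + (-1)*a^2*(u:R)^2*((u⁻¹:Rˣ):R)^2 + (-1)*a^2*(u:R)^3*((u⁻¹:Rˣ):R)^2 + (-1)*a^2*(u:R)^4*((u⁻¹:Rˣ):R)^2 + a^2*(u:R)^4*((u⁻¹:Rˣ):R)^4 + (-1)*a^2*(u:R)^5*((u⁻¹:Rˣ):R)^2 + a^2*(u:R)^5*((u⁻¹:Rˣ):R)^4 + a^2*(u:R)^6*((u⁻¹:Rˣ):R)^4 + a^2*(u:R)^7*((u⁻¹:Rˣ):R)^4 + a^2*c^2*y*((u⁻¹:Rˣ):R)^4 + (2)*a^2*c^2*y*(u:R)*((u⁻¹:Rˣ):R)^4 + (3)*a^2*c^2*y*(u:R)^2*((u⁻¹:Rˣ):R)^4 + (4)*a^2*c^2*y*(u:R)^3*((u⁻¹:Rˣ):R)^4 + (3)*a^2*c^2*y*(u:R)^4*((u⁻¹:Rˣ):R)^4 + (2)*a^2*c^2*y*(u:R)^5*((u⁻¹:Rˣ):R)^4 + a^2*c^2*y*(u:R)^6*((u⁻¹:Rˣ):R)^4)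 * hy + ((-1)*(u:R)^2*((u⁻¹:Rˣ):R)^2 + (-1)*(u:R)^3*((u⁻¹:Rˣ):R)^3 + (-1)*b*c*(u:R)^2*((u⁻¹:Rˣ):R)^2 + (-1)*b*c*(u:R)^3*((u⁻¹:Rˣ):R)^3 + (-1)*a^2*(u:R)^2*((u⁻¹:Rˣ):R)^2 + (-1)*a^2*(u:R)^3*((u⁻¹:Rˣ):R)^3 + a^2*(u:R)^6*((u⁻¹:Rˣ):R)^2 + a^2*(u:R)^7*((u⁻¹:Rˣ):R)^3) * huv + (((u⁻¹:Rˣ):R)^4 + (u:R)^2*((u⁻¹:Rˣ):R)^2 + (-1)*(u:R)^4*((u⁻¹:Rˣ):R)^4) * hdet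
    · linear_combination ((-1)*b*c*d + (-1)*a*d^2*(u:R)^2*((u⁻¹:Rˣ):R)^2 + a^2*d*(u:R)^2*((u⁻¹:Rˣ):R)^2 + a^2*c*d*x*(u:R)^2*((u⁻¹:Rˣ):R)^2 + a^2*c^2*d*y*(u:R)^2*((u⁻¹:Rˣ):R)^2 + a^2*c^2*d*y*(u:R)^3*((u⁻¹:Rˣ):R)^2 + a^2*c^2*d*y*(u:R)^4*((u⁻¹:Rˣ):R)^2 + a^2*c^2*d*y*(u:R)^5*((u⁻¹:Rˣ):R)^2) * hr + ((-1)*b*d*(u:R)^2*((u⁻¹:Rˣ):R)^2 + (-1)*b*d*(u:R)^3*((u⁻¹:Rˣ):R)^2 + (-1)*b*d*(u:R)^4*((u⁻¹:Rˣ):R)^2 + (-1)*b*d*(u:R)^5*((u⁻¹:Rˣ):R)^2 + (-1)*a*b*(u:R)^4 + (-1)*a*b*(u:R)^5 + (-1)*a*b*(u:R)^6 + a*b*(u:R)^6*((u⁻¹:Rˣ):R)^2 + (-1)*a*b*(u:R)^7 + a*b*(u:R)^7*((u⁻¹:Rˣ):R)^2 + a*b*(u:R)^8*((u⁻¹:Rˣ):R)^2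 + a*b*(u:R)^9*((u⁻¹:Rˣ):R)^2 + a^2*c*d*y*(u:R)^2*((u⁻¹:Rˣ):R)^2 + (2)*a^2*c*d*y*(u:R)^3*((u⁻¹:Rˣ):R)^2 + (3)*a^2*c*d*y*(u:R)^4*((u⁻¹:Rˣ):R)^2 + (4)*a^2*c*d*y*(u:R)^5*((u⁻¹:Rˣ):R)^2 + (3)*a^2*c*d*y*(u:R)^6*((u⁻¹:Rˣ):R)^2 + (2)*a^2*c*d*y*(u:R)^7*((u⁻¹:Rˣ):R)^2 + a^2*c*d*y*(u:R)^8*((u⁻¹:Rˣ):R)^2) * hy + (c*d*y + c*d*y*(u:R) + c*d*y*(u:R)^2 + (-1)*c*d*y*(u:R)^2*((u⁻¹:Rˣ):R)^2 + c*d*y*(u:R)^3 + (-1)*c*d*y*(u:R)^3*((u⁻¹:Rˣ):R)^2 + (-1)*c*d*y*(u:R)^4*((u⁻¹:Rˣ):R)^2 + (-1)*c*d*y*(u:R)^5*((u⁻¹:Rˣ):R)^2 + (-1)*a*c*y*(u:R)^4 + (-1)*a*c*y*(u:R)^5 + (-1)*a*c*y*(u:R)^6 + a*c*y*(u:R)^6*((u⁻¹:Rˣ):R)^2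 + (-1)*a*c*y*(u:R)^7 + a*c*y*(u:R)^7*((u⁻¹:Rˣ):R)^2 + a*c*y*(u:R)^8*((u⁻¹:Rˣ):R)^2 + a*c*y*(u:R)^9*((u⁻¹:Rˣ):R)^2) * hdet + ((-1)*c*d*y + (-1)*c*d*y*(u:R) + (-1)*c*d*y*(u:R)*((u⁻¹:Rˣ):R) + (-1)*c*d*y*(u:R)^2 + (-1)*c*d*y*(u:R)^2*((u⁻¹:Rˣ):R) + (-1)*c*d*y*(u:R)^3 + (-1)*c*d*y*(u:R)^3*((u⁻¹:Rˣ):R) + (-1)*c*d*y*(u:R)^4*((u⁻¹:Rˣ):R) + (-1)*b*d*(u:R)^4 + (-1)*b*d*(u:R)^5*((u⁻¹:Rˣ):R) + a*c*y*(u:R)^4 + a*c*y*(u:R)^5 + a*c*y*(u:R)^5*((u⁻¹:Rˣ):R) + a*c*y*(u:R)^6 + a*c*y*(u:R)^6*((u⁻¹:Rˣ):R) + a*c*y*(u:R)^7 + a*c*y*(u:R)^7*((u⁻¹:Rˣ):R) + a*c*y*(u:R)^8*((u⁻¹:Rˣ):R) + (-1)*a*b*(u:R)^4 + (-1)*a*b*(u:R)^5*((u⁻¹:Rˣ):R)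 + a*b*(u:R)^8 + a*b*(u:R)^9*((u⁻¹:Rˣ):R)) * huv
    · linear_combination (a*c^2*((u⁻¹:Rˣ):R)^2) * hr + (a*c*((u⁻¹:Rˣ):R)^2 + a*c*(u:R)*((u⁻¹:Rˣ):R)^2 + a*c*(u:R)^2*((u⁻¹:Rˣ):R)^2 + a*c*(u:R)^3*((u⁻¹:Rˣ):R)^2) * hy + (a*c*(u:R)^2 + a*c*(u:R)^3*((u⁻¹:Rˣ):R)) * huv
    · linear_combination (a*c*d*(u:R)^2*((u⁻¹:Rˣ):R)^2) * hr + (a*d*(u:R)^2*((u⁻¹:Rˣ):R)^2 + a*d*(u:R)^3*((u⁻¹:Rˣ):R)^2 + a*d*(u:R)^4*((u⁻¹:Rˣ):R)^2 + a*d*(u:R)^5*((u⁻¹:Rˣ):R)^2) * hy + ((u:R)^6*((u⁻¹:Rˣ):R)^2) * hdet + ((u:R)^4 + (u:R)^5*((u⁻¹:Rˣ):R) + b*c*(u:R)^4 + b*c*(u:R)^5*((u⁻¹:Rˣ):R)) * huv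
end

section
/- Let R be a commutative ring with 1, let c ∈ R, and let u ∈ R be a unit such that u - 1 ∈ c²R. Then the diagonal matrix h(u) = [[u, 0], [0, u⁻¹]] is an element of E(2,R,cR). -/
open Matrix

lemma E12_mem_E2 {R : Type*} [CommRing R] (x : R) : E12 x ∈ E2 R :=
  Subgroup.subset_closure ⟨x, Or.inl rfl⟩

lemma E21_mem_E2 {R : Type*} [CommRing R] (x : R) : E21 x ∈ E2 R :=
  Subgroup.subset_closure ⟨x, Or.inr rfl⟩

lemma E12_mem_E2I {R : Type*} [CommRing R] {I : Ideal R} {x : R} (hx : x ∈ I) :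
    E12 x ∈ E2I R I :=
  Subgroup.subset_closure ⟨1, one_mem _, x, hx, by group⟩

lemma E21_eq_conj {R : Type*} [CommRing R] (x : R) :
    E21 x = (E12 1 * E21 (-1) * E12 1) * E12 (-x) * (E12 1 * E21 (-1) * E12 1)⁻¹ := by
  rw [eq_mul_inv_iff_mul_eq]
  apply Subtype.ext
  show (_ : Matrix (Fin 2) (Fin 2) R) = _
  simp only [Matrix.SpecialLinearGroup.coe_mul]
  simp only [E12, E21, Matrix.SpecialLinearGroup.coe_mk]
  ext i j
  fin_cases i <;> fin_cases j <;>
    simp [Matrix.mul_apply, Fin.sum_univ_two]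

lemma E21_mem_E2I {R : Type*} [CommRing R] {I : Ideal R} {x : R} (hx : x ∈ I) :
    E21 x ∈ E2I R I := by
  rw [E21_eq_conj]
  exact Subgroup.subset_closure ⟨E12 1 * E21 (-1) * E12 1,
    mul_mem (mul_mem (E12_mem_E2 1) (E21_mem_E2 (-1))) (E12_mem_E2 1), -x, neg_mem hx, rfl⟩

/-- Remark after Lemma 3.5: if `u` is a unit with `u - 1 ∈ c²R`, then the
diagonal matrix `h(u) = [[u,0],[0,u⁻¹]]` lies in `E(2,R,cR)`. -/
theorem stmt3 {R : Type*} [CommRing R] (c : R) (u : Rˣ)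
    (hu : (u : R) - 1 ∈ Ideal.span {c ^ 2}) :
    hDiag u ∈ E2I R (Ideal.span {c}) := by
  obtain ⟨t, ht⟩ := Ideal.mem_span_singleton.mp hu
  set v : R := ((u⁻¹ : Rˣ) : R) with hvdef
  have hvu : v * (u : R) = 1 := u.inv_mul
  have hv2 : v + c ^ 2 * t * v = 1 := by
    have := u.inv_mul
    linear_combination this - v * ht
  have key : hDiag u = E21 (-(c * v)) * E12 (c * t) * E21 c * E12 (-(c * t * v)) := by
    apply Subtype.ext
    show (_ : Matrix (Fin 2) (Fin 2) R) = _
    simp only [Matrix.SpecialLinearGroup.coe_mul]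
    simp only [E12, E21, hDiag, Matrix.SpecialLinearGroup.coe_mk]
    ext i j
    fin_cases i <;> fin_cases j <;>
      simp [Matrix.mul_apply, Fin.sum_univ_two]
    · linear_combination ht
    · linear_combination c * t * hv2
    · linear_combination c * hv2
    · linear_combination hv2 - v * c ^ 2 * t * hv2
  rw [key]
  have hc : c ∈ Ideal.span {c} := Ideal.mem_span_singleton_self c
  exact mul_mem (mul_mem (mul_mem
    (E21_mem_E2I (neg_mem (Ideal.mul_mem_right _ _ hc)))
    (E12_mem_E2I (Ideal.mul_mem_right _ _ hc)))
    (E21_mem_E2I hc))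
    (E12_mem_E2I (neg_mem (by
      have : c * t * v = c * (t * v) := by ring
      rw [this]; exact Ideal.mul_mem_right _ _ hc)))
end

section
/- Let R be a commutative integral domain with 1 such that every nonzero ideal of R has finite index in R (as an additive subgroup), and suppose R contains a unit v of infinite multiplicative order. Then R is a ring with many units, i.e., for every nonzero c ∈ R there exists a unit u ∈ R* with u - 1 ∈ c²R and u⁸ - 1 ≠ 0. In fact, u can be taken to be a positive power of v. -/
/-- If `R` is an integral domain in which every nonzero ideal has finite index
and `R` contains a unit `v` of infinite order, then `R` is a ring with many
units: for each nonzero `c` there is a unit `u` (a positive power of `v`) with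
`u - 1 ∈ c²R` and `u⁸ - 1 ≠ 0`. -/
theorem stmt4 {R : Type*} [CommRing R] [IsDomain R]
    (hfin : ∀ I : Ideal R, I ≠ ⊥ → Finite (R ⧸ I))
    (v : Rˣ) (hv : ∀ k : ℕ, 0 < k → v ^ k ≠ 1) :
    ∀ c : R, c ≠ 0 → ∃ k : ℕ, 0 < k ∧
      ((v ^ k : Rˣ) : R) - 1 ∈ Ideal.span {c ^ 2} ∧
      ((v ^ k : Rˣ) : R) ^ 8 - 1 ≠ 0 := by
  intro c hc
  set I : Ideal R := Ideal.span {c ^ 2} with hI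
  have hIne : I ≠ ⊥ := by
    simp only [hI, Ne, Ideal.span_singleton_eq_bot]
    exact pow_ne_zero 2 hc
  haveI : Finite (R ⧸ I) := hfin I hIne
  -- the image of v in the quotient as a unit
  let w : (R ⧸ I)ˣ := Units.map (Ideal.Quotient.mk I : R →+* R ⧸ I).toMonoidHom v
  haveI : Finite (R ⧸ I)ˣ := Finite.of_injective _ Units.val_injective
  obtain ⟨a, b, hab, heq⟩ := Finite.exists_ne_map_eq_of_infinite (fun n : ℕ => w ^ n)
  -- WLOG a < b
  wlog hlt : a < b generalizing a b
  · exact this b a hab.symm heq.symm (hab.lt_or_gt.resolve_left hlt)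
  refine ⟨b - a, Nat.sub_pos_of_lt hlt, ?_, ?_⟩
  · have hw : w ^ (b - a) = 1 := by
      have : w ^ (b - a) * w ^ a = 1 * w ^ a := by
        rw [one_mul, ← pow_add, Nat.sub_add_cancel hlt.le, heq]
      exact mul_right_cancel this
    have : (Ideal.Quotient.mk I) ((v ^ (b - a) : Rˣ) : R) = Ideal.Quotient.mk I 1 := by
      have := congrArg (Units.val) hw
      simpa [w, Units.coe_map] using this
    simpa using (Ideal.Quotient.eq).mp this
  · intro h
    have h8 : ((v ^ ((b - a) * 8) : Rˣ) : R) = 1 := by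
      have : ((v ^ (b - a) : Rˣ) : R) ^ 8 = 1 := by linear_combination h
      simpa [pow_mul] using this
    exact hv ((b - a) * 8) (by have := Nat.sub_pos_of_lt hlt; omega) (Units.ext (by simpa using h8))
end

section
/- Let R be a commutative integral domain with 1, let I ⊴ R be a nonzero ideal, and let ‖·‖ be a non-discrete conjugation-invariant norm on the group E(2,R,I). Then for every ε > 0 there exists a matrix A ∈ E(2,R,I) whose (2,1)-entry is nonzero and with ‖A‖ ≤ ε. -/
open Matrix

/-! ### Auxiliary lemmas -/

def wMat (R : Type*) [CommRing R] : Matrix.SpecialLinearGroup (Fin 2) R :=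
  E12 (-1) * E21 1 * E12 (-1)

lemma wMat_coe {R : Type*} [CommRing R] :
    (wMat R : Matrix (Fin 2) (Fin 2) R) = !![0, -1; 1, 0] := by
  rw [wMat, Matrix.SpecialLinearGroup.coe_mul, Matrix.SpecialLinearGroup.coe_mul]
  simp [E12, E21]

lemma wMat_mem {R : Type*} [CommRing R] : wMat R ∈ E2 R := by
  refine mul_mem (mul_mem ?_ ?_) ?_ <;> apply Subgroup.subset_closure
  · exact ⟨-1, Or.inl rfl⟩
  · exact ⟨1, Or.inr rfl⟩
  · exact ⟨-1, Or.inl rfl⟩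

lemma wMat_conj {R : Type*} [CommRing R] (x : R) :
    wMat R * E12 x * (wMat R)⁻¹ = E21 (-x) := by
  rw [mul_inv_eq_iff_eq_mul]
  apply Subtype.ext
  show ((wMat R : Matrix (Fin 2) (Fin 2) R) * _) = ((E21 (-x) : Matrix (Fin 2) (Fin 2) R) * _)
  rw [wMat_coe]
  simp [E12, E21]

lemma E21_mem {R : Type*} [CommRing R] {I : Ideal R} {y : R} (hy : y ∈ I) :
    E21 y ∈ E2I R I := by
  apply Subgroup.subset_closure
  exact ⟨wMat R, wMat_mem, -y, neg_mem hy, by rw [wMat_conj, neg_neg]⟩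

lemma E21_inv {R : Type*} [CommRing R] (y : R) : (E21 y)⁻¹ = E21 (-y) := by
  apply inv_eq_of_mul_eq_one_right
  apply Subtype.ext
  show ((E21 y : Matrix (Fin 2) (Fin 2) R) * _) = _
  simp [E21, Matrix.one_fin_two]

lemma conj_entry {R : Type*} [CommRing R] (y : R) (G : Matrix.SpecialLinearGroup (Fin 2) R)
    (hc : (G : Matrix (Fin 2) (Fin 2) R) 1 0 = 0) :
    ((E21 y * G * (E21 y)⁻¹ : Matrix.SpecialLinearGroup (Fin 2) R) : Matrix (Fin 2) (Fin 2) R) 1 0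
      = y * ((G : Matrix (Fin 2) (Fin 2) R) 0 0 - (G : Matrix (Fin 2) (Fin 2) R) 1 1
          - y * (G : Matrix (Fin 2) (Fin 2) R) 0 1) := by
  rw [E21_inv]
  show ((E21 y : Matrix (Fin 2) (Fin 2) R) * G * (E21 (-y) : Matrix (Fin 2) (Fin 2) R)) 1 0 = _
  simp [E21, Matrix.mul_apply, Fin.sum_univ_two, Matrix.vecMul, dotProduct, Matrix.vecHead, Matrix.vecTail, hc]
  ring

lemma exists_y {R : Type*} [CommRing R] [IsDomain R] (I : Ideal R) (hI : I ≠ ⊥)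
    (a b d : R) (had : a * d = 1) (hne : ¬(b = 0 ∧ a = d)) :
    ∃ y ∈ I, y ≠ 0 ∧ a - d - y * b ≠ 0 := by
  obtain ⟨y₀, hy₀I, hy₀⟩ := Submodule.exists_mem_ne_zero_of_ne_bot hI
  by_cases h1 : a - d - y₀ * b ≠ 0
  · exact ⟨y₀, hy₀I, hy₀, h1⟩
  push_neg at h1
  have hab : a - d = y₀ * b := by linear_combination h1
  have hb : b ≠ 0 := by
    rintro rfl
    exact hne ⟨rfl, by linear_combination hab⟩
  by_cases h2 : ∃ y ∈ I, y ≠ 0 ∧ y ≠ y₀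
  · obtain ⟨y, hyI, hy0, hyy⟩ := h2
    refine ⟨y, hyI, hy0, ?_⟩
    intro h
    apply hyy
    have : (y₀ - y) * b = 0 := by linear_combination h - hab
    rcases mul_eq_zero.mp this with h' | h'
    · exact (sub_eq_zero.mp h').symm
    · exact absurd h' hb
  · push_neg at h2
    have hsq : y₀ * y₀ = y₀ := h2 _ (I.mul_mem_left y₀ hy₀I) (mul_ne_zero hy₀ hy₀)
    have hy1 : y₀ = 1 := by
      have := mul_left_cancel₀ hy₀ (hsq.trans (mul_one y₀).symm)
      exact this
    have hbI : b ∈ I := by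
      have : b * y₀ ∈ I := I.mul_mem_left b hy₀I
      rwa [hy1, mul_one] at this
    have hb1 : b = y₀ := h2 b hbI hb
    have haI : a ∈ I := by
      have : a * y₀ ∈ I := I.mul_mem_left a hy₀I
      rwa [hy1, mul_one] at this
    have ha0 : a ≠ 0 := fun h => by simp [h] at had
    have ha1 : a = y₀ := h2 a haI ha0
    have hd1 : d = 1 := by
      rw [ha1, hy1, one_mul] at had; exact had
    exfalso
    rw [ha1, hy1, hd1, hb1, hy1, mul_one] at hab
    simp at hab

/-- From the proof of Lemma 3.4: for a non-discrete conjugation-invariant norm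
on `E(2,R,I)` (with `R` a domain and `I` a nonzero ideal) and every `ε > 0`
there is an element of `E(2,R,I)` with nonzero `(2,1)`-entry and norm `≤ ε`. -/
theorem stmt6 {R : Type*} [CommRing R] [IsDomain R]
    (I : Ideal R) (hI : I ≠ ⊥)
    (f : (E2I R I) → ℝ)
    (hf_nonneg : ∀ a, 0 ≤ f a)
    (hf_zero : ∀ a, f a = 0 ↔ a = 1)
    (hf_inv : ∀ a, f a⁻¹ = f a)
    (hf_mul : ∀ a b, f (a * b) ≤ f a + f b)
    (hf_conj : ∀ a b, f (a * b * a⁻¹) = f b)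
    (hf_nondisc : ∀ ε : ℝ, 0 < ε → ∃ g : (E2I R I), g ≠ 1 ∧ f g < ε) :
    ∀ ε : ℝ, 0 < ε → ∃ A : (E2I R I),
      (A : Matrix.SpecialLinearGroup (Fin 2) R).1 1 0 ≠ 0 ∧ f A ≤ ε := by
  have key : ∀ g : E2I R I, g ≠ 1 →
      ((g : Matrix.SpecialLinearGroup (Fin 2) R) : Matrix (Fin 2) (Fin 2) R) ≠ !![-1, 0; 0, -1] →
      ∃ A : E2I R I,
        (A : Matrix.SpecialLinearGroup (Fin 2) R).1 1 0 ≠ 0 ∧ f A = f g := by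
    intro g hg1 hgm
    set G := (g : Matrix.SpecialLinearGroup (Fin 2) R) with hG
    by_cases hc : (G : Matrix (Fin 2) (Fin 2) R) 1 0 = 0
    case neg => exact ⟨g, hc, rfl⟩
    have hdet : (G : Matrix (Fin 2) (Fin 2) R) 0 0 * (G : Matrix (Fin 2) (Fin 2) R) 1 1 = 1 := by
      have h := G.2
      rw [Matrix.det_fin_two] at h
      rw [hc] at h
      linear_combination h
    have hne : ¬((G : Matrix (Fin 2) (Fin 2) R) 0 1 = 0 ∧
        (G : Matrix (Fin 2) (Fin 2) R) 0 0 = (G : Matrix (Fin 2) (Fin 2) R) 1 1) := by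
      rintro ⟨hb, hadd⟩
      have hsq : ((G : Matrix (Fin 2) (Fin 2) R) 0 0 - 1) *
          ((G : Matrix (Fin 2) (Fin 2) R) 0 0 + 1) = 0 := by
        linear_combination hdet - (G : Matrix (Fin 2) (Fin 2) R) 0 0 * hadd.symm
      rcases mul_eq_zero.mp hsq with h' | h'
      · have ha : (G : Matrix (Fin 2) (Fin 2) R) 0 0 = 1 := by linear_combination h'
        apply hg1
        have hmat : (G : Matrix (Fin 2) (Fin 2) R) = !![1, 0; 0, 1] := by
          ext i j
          fin_cases i <;> fin_cases j <;>
            simp [ha, hb, hc, hadd ▸ ha]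
        have hG1 : G = 1 := Subtype.ext (by rw [hmat]; simp [Matrix.one_fin_two])
        exact Subtype.ext hG1
      · have ha : (G : Matrix (Fin 2) (Fin 2) R) 0 0 = -1 := by linear_combination h'
        apply hgm
        ext i j
        fin_cases i <;> fin_cases j <;>
          simp [ha, hb, hc, hadd ▸ ha]
    obtain ⟨y, hyI, hy0, hy⟩ := exists_y I hI _ _ _ hdet hne
    let h : E2I R I := ⟨E21 y, E21_mem hyI⟩
    refine ⟨h * g * h⁻¹, ?_, hf_conj h g⟩
    have hcoe : ((h * g * h⁻¹ : E2I R I) : Matrix.SpecialLinearGroup (Fin 2) R)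
        = E21 y * G * (E21 y)⁻¹ := rfl
    show ((h * g * h⁻¹ : E2I R I) : Matrix.SpecialLinearGroup (Fin 2) R).1 1 0 ≠ 0
    rw [hcoe]
    rw [show ((E21 y * G * (E21 y)⁻¹ : Matrix.SpecialLinearGroup (Fin 2) R)).1 1 0
        = ((E21 y * G * (E21 y)⁻¹ : Matrix.SpecialLinearGroup (Fin 2) R) :
            Matrix (Fin 2) (Fin 2) R) 1 0 from rfl]
    rw [conj_entry y G hc]
    exact mul_ne_zero hy0 hy
  intro ε hε
  obtain ⟨g₀, hg₀1, hg₀f⟩ := hf_nondisc ε hε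
  by_cases hm : ((g₀ : Matrix.SpecialLinearGroup (Fin 2) R) : Matrix (Fin 2) (Fin 2) R)
      = !![-1, 0; 0, -1]
  · have hf₀ : 0 < f g₀ := by
      rcases (hf_nonneg g₀).lt_or_eq with h | h
      · exact h
      · exact absurd ((hf_zero g₀).mp h.symm) hg₀1
    obtain ⟨g, hg1, hgf⟩ := hf_nondisc (min ε (f g₀)) (lt_min hε hf₀)
    have hgm : ((g : Matrix.SpecialLinearGroup (Fin 2) R) : Matrix (Fin 2) (Fin 2) R)
        ≠ !![-1, 0; 0, -1] := by
      intro h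
      have hgg : g = g₀ := Subtype.ext (Subtype.ext (h.trans hm.symm))
      rw [hgg] at hgf
      exact absurd (hgf.trans_le (min_le_right _ _)) (lt_irrefl _)
    obtain ⟨A, hA, hfa⟩ := key g hg1 hgm
    exact ⟨A, hA, by rw [hfa]; exact (hgf.trans_le (min_le_left _ _)).le⟩
  · obtain ⟨A, hA, hfa⟩ := key g₀ hg₀1 hm
    exact ⟨A, hA, hfa ▸ hg₀f.le⟩
end
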